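/- arXiv:1711.07747 — 6 statements merged into one kernel-verified Lean document; each statement's English description precedes it below -/
import Mathlib

section
/- If S = [[A,B],[C,D]] is a real antisymplectic 2n×2n matrix (SᵀJS = -J) and Z ∈ 𝒮ₙ, then Φ_S(Z) = (AZ+B)(CZ+D)⁻¹ is symmetric with negative definite imaginary part, i.e., Φ_S(Z) ∈ 𝒮̄ₙ. -/
open Matrix

noncomputable section

/-- The standard symplectic form matrix over ℂ. -/
def J (n : ℕ) : Matrix (Fin n ⊕ Fin n) (Fin n ⊕ Fin n) ℂ :=
  Matrix.fromBlocks 0 1 (-1) 0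

/-- The standard symplectic form matrix over ℝ. -/
def JR (n : ℕ) : Matrix (Fin n ⊕ Fin n) (Fin n ⊕ Fin n) ℝ :=
  Matrix.fromBlocks 0 1 (-1) 0

/-- Membership in the Siegel upper half space: symmetric with positive definite
imaginary part. -/
def InSiegel {n : ℕ} (Z : Matrix (Fin n) (Fin n) ℂ) : Prop :=
  Zᵀ = Z ∧ (Z.map Complex.im).PosDef

/-- Membership in the lower Siegel space: symmetric with negative definite
imaginary part. -/
def InSiegelBar {n : ℕ} (Z : Matrix (Fin n) (Fin n) ℂ) : Prop :=
  Zᵀ = Z ∧ (-(Z.map Complex.im)).PosDef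

/-- The generalized linear fractional transformation Φ. -/
def Phi {n : ℕ} (A B C D Z : Matrix (Fin n) (Fin n) ℂ) : Matrix (Fin n) (Fin n) ℂ :=
  (A * Z + B) * (C * Z + D)⁻¹

/-- The ℓ²-operator norm of a complex matrix. -/
def opNorm {n : ℕ} (M : Matrix (Fin n) (Fin n) ℂ) : ℝ :=
  ‖Matrix.toEuclideanCLM (𝕜 := ℂ) (n := Fin n) M‖

open scoped ComplexOrder

section Helpers

variable {n : ℕ}

/-- Complexification of a real matrix. -/
private def cm (M : Matrix (Fin n) (Fin n) ℝ) : Matrix (Fin n) (Fin n) ℂ :=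
  M.map Complex.ofReal

private lemma cm_mul (M N : Matrix (Fin n) (Fin n) ℝ) : cm (M * N) = cm M * cm N :=
  Matrix.map_mul (f := Complex.ofRealHom)

private lemma cm_transpose (M : Matrix (Fin n) (Fin n) ℝ) : cm Mᵀ = (cm M)ᵀ := rfl

private lemma cm_conjTranspose (M : Matrix (Fin n) (Fin n) ℝ) : (cm M)ᴴ = (cm M)ᵀ := by
  ext i j; simp [cm, conjTranspose_apply]

private lemma cm_sub (M N : Matrix (Fin n) (Fin n) ℝ) : cm (M - N) = cm M - cm N := by
  ext i j; simp [cm]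

private lemma cm_neg (M : Matrix (Fin n) (Fin n) ℝ) : cm (-M) = -(cm M) := by
  ext i j; simp [cm]

private lemma cm_zero : cm (0 : Matrix (Fin n) (Fin n) ℝ) = 0 := by
  ext i j; simp [cm]

private lemma cm_one : cm (1 : Matrix (Fin n) (Fin n) ℝ) = 1 := by
  ext i j; simp [cm, Matrix.one_apply]; split <;> simp

private lemma cv_star (x : Fin n → ℝ) :
    star (fun i => (x i : ℂ)) = fun i => (x i : ℂ) := by
  funext i; simp

private lemma vec_decomp (v : Fin n → ℂ) :
    v = (fun i => ((v i).re : ℂ)) + Complex.I • (fun i => ((v i).im : ℂ)) := by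
  funext i
  simp [Complex.ext_iff]

private lemma quad_form_eq (M : Matrix (Fin n) (Fin n) ℝ) (hM : Mᵀ = M) (v : Fin n → ℂ) :
    star v ⬝ᵥ (M.map Complex.ofReal *ᵥ v) =
      (((fun i => (v i).re) ⬝ᵥ M *ᵥ (fun i => (v i).re)
        + (fun i => (v i).im) ⬝ᵥ M *ᵥ (fun i => (v i).im) : ℝ) : ℂ) := by
  set x : Fin n → ℝ := fun i => (v i).re
  set y : Fin n → ℝ := fun i => (v i).im
  have hsym : x ⬝ᵥ M *ᵥ y = y ⬝ᵥ M *ᵥ x := by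
    rw [Matrix.dotProduct_mulVec, ← Matrix.mulVec_transpose, hM, dotProduct_comm]
  have hv : v = (fun i => (x i : ℂ)) + Complex.I • (fun i => (y i : ℂ)) := vec_decomp v
  rw [hv]
  simp only [star_add, star_smul, Matrix.mulVec_add, Matrix.mulVec_smul, dotProduct_add,
    add_dotProduct, dotProduct_smul, smul_dotProduct, cv_star, RCLike.star_def, Complex.conj_I]
  have h1 : ∀ (a b : Fin n → ℝ), (fun i => (a i : ℂ)) ⬝ᵥ (M.map Complex.ofReal *ᵥ fun i => (b i : ℂ))
      = ((a ⬝ᵥ M *ᵥ b : ℝ) : ℂ) := by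
    intro a b
    simp [Matrix.mulVec, dotProduct, Finset.mul_sum, Complex.ofReal_sum]
  rw [h1, h1, h1, h1, hsym]
  simp only [smul_eq_mul]
  push_cast
  linear_combination (-((y ⬝ᵥ M *ᵥ y : ℝ) : ℂ)) * Complex.I_sq

private lemma symm_of_cm_herm {M : Matrix (Fin n) (Fin n) ℝ}
    (h : (M.map Complex.ofReal).IsHermitian) : Mᵀ = M := by
  ext i j
  have := congrFun (congrFun h i) j
  simp [Matrix.conjTranspose_apply, Matrix.map_apply] at this
  exact_mod_cast this

private lemma posDef_cm_of_posDef {M : Matrix (Fin n) (Fin n) ℝ} (hM : M.PosDef) :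
    (M.map Complex.ofReal).PosDef := by
  have hMsym : Mᵀ = M := hM.1
  refine Matrix.PosDef.of_dotProduct_mulVec_pos ?_ ?_
  · ext i j
    simp [Matrix.conjTranspose_apply, Matrix.map_apply]
    exact_mod_cast congrFun (congrFun hMsym i) j
  · intro v hv
    rw [quad_form_eq M hMsym v]
    set x : Fin n → ℝ := fun i => (v i).re
    set y : Fin n → ℝ := fun i => (v i).im
    have hxy : x ≠ 0 ∨ y ≠ 0 := by
      by_contra h
      push_neg at h
      apply hv
      funext i
      have hx := congrFun h.1 i
      have hy := congrFun h.2 i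
      simp [x, y] at hx hy
      exact Complex.ext hx hy
    have key : ∀ a : Fin n → ℝ, 0 ≤ a ⬝ᵥ M *ᵥ a := by
      intro a
      have := hM.posSemidef.dotProduct_mulVec_nonneg a
      simpa [star_trivial] using this
    have hpos : 0 < x ⬝ᵥ M *ᵥ x + y ⬝ᵥ M *ᵥ y := by
      rcases hxy with hx | hy
      · have := hM.dotProduct_mulVec_pos hx
        simp only [star_trivial] at this
        have := key y
        linarith
      · have := hM.dotProduct_mulVec_pos hy
        simp only [star_trivial] at this
        have := key x
        linarith
    exact Complex.zero_lt_real.mpr hpos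

private lemma posDef_of_posDef_cm {M : Matrix (Fin n) (Fin n) ℝ}
    (hM : (M.map Complex.ofReal).PosDef) : M.PosDef := by
  have hMsym : Mᵀ = M := symm_of_cm_herm hM.1
  refine Matrix.PosDef.of_dotProduct_mulVec_pos hMsym (fun x hx => ?_)
  have hv : (fun i => (x i : ℂ)) ≠ 0 := by
    intro h
    apply hx
    funext i
    have := congrFun h i
    simpa using this
  have h2 := hM.dotProduct_mulVec_pos hv
  rw [quad_form_eq M hMsym _] at h2
  simp only [Complex.ofReal_re, Complex.ofReal_im] at h2
  have h5 : 0 < x ⬝ᵥ M *ᵥ x + (0 : Fin n → ℝ) ⬝ᵥ M *ᵥ (0 : Fin n → ℝ) :=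
    Complex.zero_lt_real.mp h2
  simp only [Matrix.mulVec_zero, dotProduct_zero, zero_dotProduct, add_zero] at h5
  simpa [star_trivial] using h5

private lemma posDef_conj {M B : Matrix (Fin n) (Fin n) ℂ} (hM : M.PosDef) (hB : IsUnit B) :
    (Bᴴ * M * B).PosDef := by
  refine Matrix.PosDef.of_dotProduct_mulVec_pos (Matrix.isHermitian_conjTranspose_mul_mul B hM.1) (fun x hx => ?_)
  have hBx : B *ᵥ x ≠ 0 := by
    intro h
    exact hx ((Matrix.mulVec_injective_iff_isUnit.mpr hB).eq_iff.mp (by simpa using h))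
  have := hM.dotProduct_mulVec_pos hBx
  simpa only [Matrix.star_mulVec, Matrix.dotProduct_mulVec, Matrix.vecMul_vecMul] using this

/-- A symmetric matrix minus its conjugate transpose is `2i` times its imaginary part. -/
private lemma sub_conjTranspose_symm {W : Matrix (Fin n) (Fin n) ℂ} (h : Wᵀ = W) :
    W - Wᴴ = (2 * Complex.I) • cm (W.map Complex.im) := by
  ext i j
  have hji : W j i = W i j := by
    conv_lhs => rw [← h, transpose_apply]
  simp only [Matrix.sub_apply, conjTranspose_apply, Matrix.smul_apply, cm, Matrix.map_apply,
    hji, RCLike.star_def, smul_eq_mul]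
  rw [Complex.sub_conj]
  push_cast
  ring

end Helpers

theorem stmt3 (n : ℕ) (A B C D : Matrix (Fin n) (Fin n) ℝ)
    (hS : (Matrix.fromBlocks A B C D)ᵀ * JR n * Matrix.fromBlocks A B C D = -(JR n))
    (Z : Matrix (Fin n) (Fin n) ℂ) (hZ : InSiegel Z) :
    InSiegelBar (Phi (A.map Complex.ofReal) (B.map Complex.ofReal) (C.map Complex.ofReal)
      (D.map Complex.ofReal) Z) := by
  obtain ⟨hZsymm, hZpos⟩ := hZ
  -- real block relations
  rw [JR, Matrix.fromBlocks_transpose, Matrix.fromBlocks_multiply, Matrix.fromBlocks_multiply,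
    Matrix.fromBlocks_neg, Matrix.fromBlocks_inj] at hS
  obtain ⟨e11, e12, e21, e22⟩ := hS
  simp only [Matrix.mul_zero, Matrix.mul_one, Matrix.mul_neg, Matrix.neg_mul,
    Matrix.zero_mul, Matrix.one_mul, zero_add, add_zero, neg_zero, neg_neg] at e11 e12 e21 e22
  have r11 : Aᵀ * C - Cᵀ * A = 0 := by rw [sub_eq_neg_add]; exact e11
  have r12 : Aᵀ * D - Cᵀ * B = -1 := by rw [sub_eq_neg_add]; exact e12
  have r21 : Bᵀ * C - Dᵀ * A = 1 := by rw [sub_eq_neg_add]; exact e21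
  have r22 : Bᵀ * D - Dᵀ * B = 0 := by rw [sub_eq_neg_add]; exact e22
  -- complexified relations
  have c11 : (cm A)ᵀ * cm C - (cm C)ᵀ * cm A = 0 := by
    rw [← cm_transpose, ← cm_transpose, ← cm_mul, ← cm_mul, ← cm_sub, r11, cm_zero]
  have c12 : (cm A)ᵀ * cm D - (cm C)ᵀ * cm B = -1 := by
    rw [← cm_transpose, ← cm_transpose, ← cm_mul, ← cm_mul, ← cm_sub, r12, cm_neg, cm_one]
  have c21 : (cm B)ᵀ * cm C - (cm D)ᵀ * cm A = 1 := by
    rw [← cm_transpose, ← cm_transpose, ← cm_mul, ← cm_mul, ← cm_sub, r21, cm_one]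
  have c22 : (cm B)ᵀ * cm D - (cm D)ᵀ * cm B = 0 := by
    rw [← cm_transpose, ← cm_transpose, ← cm_mul, ← cm_mul, ← cm_sub, r22, cm_zero]
  set A' := cm A with hA'
  set B' := cm B with hB'
  set C' := cm C with hC'
  set D' := cm D with hD'
  set P := A' * Z + B' with hP
  set Q := C' * Z + D' with hQ
  -- transpose identity
  have expandT : Pᵀ * Q - Qᵀ * P = Z * (A'ᵀ * C' - C'ᵀ * A') * Z + Z * (A'ᵀ * D' - C'ᵀ * B')
      + (B'ᵀ * C' - D'ᵀ * A') * Z + (B'ᵀ * D' - D'ᵀ * B') := by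
    rw [hP, hQ]
    simp only [transpose_add, transpose_mul, hZsymm]
    noncomm_ring
  have hPQ : Pᵀ * Q = Qᵀ * P := by
    have h := expandT
    rw [c11, c12, c21, c22] at h
    simp only [Matrix.mul_zero, Matrix.zero_mul, Matrix.mul_neg, Matrix.mul_one, Matrix.one_mul,
      add_zero, zero_add] at h
    have h0 : Pᵀ * Q - Qᵀ * P = 0 := by rw [h]; abel
    exact sub_eq_zero.mp h0
  -- conjugate transpose identity
  have expandH : Pᴴ * Q - Qᴴ * P = Zᴴ * (A'ᵀ * C' - C'ᵀ * A') * Z + Zᴴ * (A'ᵀ * D' - C'ᵀ * B')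
      + (B'ᵀ * C' - D'ᵀ * A') * Z + (B'ᵀ * D' - D'ᵀ * B') := by
    rw [hP, hQ, hA', hB', hC', hD']
    simp only [conjTranspose_add, conjTranspose_mul, cm_conjTranspose]
    noncomm_ring
  have hH : Pᴴ * Q - Qᴴ * P = Z - Zᴴ := by
    rw [expandH, c11, c12, c21, c22]
    simp only [Matrix.mul_zero, Matrix.zero_mul, Matrix.mul_neg, Matrix.mul_one, Matrix.one_mul,
      add_zero, zero_add]
    abel
  -- the complexified imaginary part of Z
  have hZconj : Z - Zᴴ = (2 * Complex.I) • cm (Z.map Complex.im) :=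
    sub_conjTranspose_symm hZsymm
  have hYc : (cm (Z.map Complex.im)).PosDef := posDef_cm_of_posDef hZpos
  have hI2 : (2 * Complex.I) ≠ 0 := by
    simp [Complex.I_ne_zero]
  -- Q is invertible
  have hker : ∀ v, Q *ᵥ v = 0 → v = 0 := by
    intro v hv
    by_contra hv0
    have h2 := congrArg (fun M => star v ⬝ᵥ (M *ᵥ v)) (hH.trans hZconj)
    have hL : star v ⬝ᵥ ((Pᴴ * Q - Qᴴ * P) *ᵥ v) = 0 := by
      rw [Matrix.sub_mulVec, ← Matrix.mulVec_mulVec, ← Matrix.mulVec_mulVec, hv,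
        Matrix.mulVec_zero, dotProduct_sub, dotProduct_zero, zero_sub,
        Matrix.dotProduct_mulVec, ← Matrix.star_mulVec, hv]
      simp
    rw [hL] at h2
    have hR : star v ⬝ᵥ (((2 * Complex.I) • cm (Z.map Complex.im)) *ᵥ v)
        = (2 * Complex.I) * (star v ⬝ᵥ (cm (Z.map Complex.im) *ᵥ v)) := by
      rw [Matrix.smul_mulVec, dotProduct_smul, smul_eq_mul]
    rw [hR] at h2
    have hpos := hYc.dotProduct_mulVec_pos hv0
    exact (mul_ne_zero hI2 hpos.ne') h2.symm
  have hQunit : IsUnit Q := by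
    rw [← Matrix.mulVec_injective_iff_isUnit]
    intro u w huw
    have h0 : Q *ᵥ (u - w) = 0 := by rw [Matrix.mulVec_sub, huw, sub_self]
    exact sub_eq_zero.mp (hker _ h0)
  have hQdet : IsUnit Q.det := (Matrix.isUnit_iff_isUnit_det Q).mp hQunit
  have hQTdet : IsUnit Qᵀ.det := by rw [Matrix.det_transpose]; exact hQdet
  have hQHdet : IsUnit Qᴴ.det := by rw [Matrix.det_conjTranspose]; exact hQdet.star
  have hPhiEq : Phi (A.map Complex.ofReal) (B.map Complex.ofReal) (C.map Complex.ofReal)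
      (D.map Complex.ofReal) Z = P * Q⁻¹ := rfl
  rw [hPhiEq]
  -- symmetry
  have hWsymm : (P * Q⁻¹)ᵀ = P * Q⁻¹ := by
    have hPt : Pᵀ = Qᵀ * P * Q⁻¹ := by
      rw [← hPQ, Matrix.mul_assoc, Matrix.mul_nonsing_inv Q hQdet, Matrix.mul_one]
    rw [transpose_mul, Matrix.transpose_nonsing_inv, hPt, ← Matrix.mul_assoc,
      ← Matrix.mul_assoc, Matrix.nonsing_inv_mul Qᵀ hQTdet, Matrix.one_mul]
  refine ⟨hWsymm, ?_⟩
  -- imaginary part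
  have hWH : Qᴴ * ((P * Q⁻¹) - (P * Q⁻¹)ᴴ) * Q = -((2 * Complex.I) • cm (Z.map Complex.im)) := by
    have h1 : (P * Q⁻¹)ᴴ = (Qᴴ)⁻¹ * Pᴴ := by
      rw [conjTranspose_mul, Matrix.conjTranspose_nonsing_inv]
    rw [Matrix.mul_sub, Matrix.sub_mul, h1]
    have e1 : Qᴴ * (P * Q⁻¹) * Q = Qᴴ * P := by
      rw [Matrix.mul_assoc Qᴴ (P * Q⁻¹) Q, Matrix.mul_assoc P Q⁻¹ Q,
        Matrix.nonsing_inv_mul Q hQdet, Matrix.mul_one]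
    have e2 : Qᴴ * ((Qᴴ)⁻¹ * Pᴴ) * Q = Pᴴ * Q := by
      rw [← Matrix.mul_assoc, Matrix.mul_nonsing_inv Qᴴ hQHdet, Matrix.one_mul]
    rw [e1, e2, ← neg_sub, hH, hZconj]
  have hWsub : (P * Q⁻¹) - (P * Q⁻¹)ᴴ = (2 * Complex.I) • cm ((P * Q⁻¹).map Complex.im) :=
    sub_conjTranspose_symm hWsymm
  rw [hWsub] at hWH
  have hNeq : Qᴴ * cm ((P * Q⁻¹).map Complex.im) * Q = -(cm (Z.map Complex.im)) := by
    apply smul_right_injective _ hI2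
    simp only
    rw [← Matrix.smul_mul, ← Matrix.mul_smul, smul_neg, ← hWH]
  have hNneg : cm (-(((P * Q⁻¹)).map Complex.im)) = (Q⁻¹)ᴴ * cm (Z.map Complex.im) * Q⁻¹ := by
    have h3 : Qᴴ * cm (-(((P * Q⁻¹)).map Complex.im)) * Q = cm (Z.map Complex.im) := by
      rw [cm_neg, Matrix.mul_neg, Matrix.neg_mul, hNeq, neg_neg]
    rw [← h3, Matrix.conjTranspose_nonsing_inv]
    rw [← Matrix.mul_assoc, ← Matrix.mul_assoc, Matrix.nonsing_inv_mul Qᴴ hQHdet,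
      Matrix.one_mul, Matrix.mul_assoc, Matrix.mul_nonsing_inv Q hQdet, Matrix.mul_one]
  have hQinvUnit : IsUnit Q⁻¹ :=
    ⟨⟨Q⁻¹, Q, Matrix.nonsing_inv_mul Q hQdet, Matrix.mul_nonsing_inv Q hQdet⟩, rfl⟩
  have hposC : (cm (-(((P * Q⁻¹)).map Complex.im))).PosDef := by
    rw [hNneg]
    exact posDef_conj hYc hQinvUnit
  exact posDef_of_posDef_cm hposC

end
end

section
/- For every Z ∈ 𝒮̄ₙ there exists a real antisymplectic matrix S (SᵀJS = -J) with Φ_S(iIₙ) = Z; explicitly, for Z = X + iY with Y negative definite, S = [[-√(-Y), X√((-Y)⁻¹)],[0, √((-Y)⁻¹)]] works. -/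
open Matrix

noncomputable section

open scoped ComplexOrder in
/-- The square root of a positive semidefinite matrix, as defined in the older Mathlib
(removed since). -/
def Matrix.PosSemidef.sqrt {n : Type*} [Fintype n] [DecidableEq n] {𝕜 : Type*} [RCLike 𝕜]
    {A : Matrix n n 𝕜} (hA : A.PosSemidef) : Matrix n n 𝕜 :=
  hA.1.eigenvectorUnitary.1 * diagonal ((↑) ∘ (√·) ∘ hA.1.eigenvalues) *
  (star hA.1.eigenvectorUnitary : Matrix n n 𝕜)

section sqrtPort

open scoped MatrixOrder ComplexOrder

theorem Matrix.PosSemidef.sqrt_eq_cfcSqrt {n : Type*} [Fintype n] [DecidableEq n] {𝕜 : Type*}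
    [RCLike 𝕜] {A : Matrix n n 𝕜} (hA : A.PosSemidef) : hA.sqrt = CFC.sqrt A := by
  rw [CFC.sqrt_eq_cfc, cfc_nnreal_eq_real _ A, hA.1.cfc_eq]
  simp only [IsHermitian.cfc, Matrix.PosSemidef.sqrt, Unitary.conjStarAlgAut_apply]
  congr 3
  funext i
  simp [Real.coe_sqrt, Real.coe_toNNReal', hA.eigenvalues_nonneg i]

theorem Matrix.PosSemidef.sqrt_mul_self {n : Type*} [Fintype n] [DecidableEq n] {𝕜 : Type*}
    [RCLike 𝕜] {A : Matrix n n 𝕜} (hA : A.PosSemidef) : hA.sqrt * hA.sqrt = A := by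
  rw [hA.sqrt_eq_cfcSqrt]
  exact CFC.sqrt_mul_sqrt_self A hA.nonneg

theorem Matrix.PosSemidef.posSemidef_sqrt {n : Type*} [Fintype n] [DecidableEq n] {𝕜 : Type*}
    [RCLike 𝕜] {A : Matrix n n 𝕜} (hA : A.PosSemidef) : hA.sqrt.PosSemidef := by
  rw [hA.sqrt_eq_cfcSqrt]
  exact Matrix.nonneg_iff_posSemidef.mp (CFC.sqrt_nonneg A)

theorem Matrix.PosSemidef.eq_sqrt_of_sq_eq {n : Type*} [Fintype n] [DecidableEq n] {𝕜 : Type*}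
    [RCLike 𝕜] {A : Matrix n n 𝕜} (hA : A.PosSemidef) {B : Matrix n n 𝕜} (hB : B.PosSemidef)
    (h : A ^ 2 = B) : A = hB.sqrt := by
  rw [hB.sqrt_eq_cfcSqrt]
  exact (CFC.sqrt_unique (by rw [← h, pow_two]) hA.nonneg).symm

end sqrtPort

theorem stmt4 (n : ℕ) (Z : Matrix (Fin n) (Fin n) ℂ) (hsym : Zᵀ = Z)
    (hY : (-(Z.map Complex.im)).PosDef) :
    ∃ A B C D : Matrix (Fin n) (Fin n) ℝ,
      A = -hY.posSemidef.sqrt ∧ B = Z.map Complex.re * hY.inv.posSemidef.sqrt ∧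
      C = 0 ∧ D = hY.inv.posSemidef.sqrt ∧
      (Matrix.fromBlocks A B C D)ᵀ * JR n * Matrix.fromBlocks A B C D = -(JR n) ∧
      Phi (A.map Complex.ofReal) (B.map Complex.ofReal) (C.map Complex.ofReal)
        (D.map Complex.ofReal) (Complex.I • 1) = Z := by
  set Y : Matrix (Fin n) (Fin n) ℝ := -(Z.map Complex.im) with hYdef
  set R := hY.posSemidef.sqrt with hRdef
  set X : Matrix (Fin n) (Fin n) ℝ := Z.map Complex.re with hXdef
  have hRR : R * R = Y := hY.posSemidef.sqrt_mul_self
  have hRt : Rᵀ = R := by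
    rw [← conjTranspose_eq_transpose_of_trivial]
    exact hY.posSemidef.posSemidef_sqrt.isHermitian
  have hdet : IsUnit R.det := by
    rw [isUnit_iff_ne_zero]
    intro h
    have := hY.det_pos
    rw [← hRR, det_mul, h, mul_zero] at this
    exact lt_irrefl _ this
  have h2 : R⁻¹ ^ 2 = Y⁻¹ := by rw [pow_two, ← Matrix.mul_inv_rev, hRR]
  have hD : hY.inv.posSemidef.sqrt = R⁻¹ :=
    (hY.posSemidef.posSemidef_sqrt.inv.eq_sqrt_of_sq_eq hY.inv.posSemidef h2).symm
  have hRRinv : R * R⁻¹ = 1 := mul_nonsing_inv R hdet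
  have hRinvR : R⁻¹ * R = 1 := nonsing_inv_mul R hdet
  have hRinvT : (R⁻¹)ᵀ = R⁻¹ := by rw [transpose_nonsing_inv, hRt]
  have hXt : Xᵀ = X := by rw [hXdef, ← Matrix.transpose_map, hsym]
  refine ⟨-R, X * hY.inv.posSemidef.sqrt, 0, hY.inv.posSemidef.sqrt, rfl, rfl, rfl, rfl, ?_, ?_⟩
  · rw [hD]
    simp only [JR, fromBlocks_transpose, fromBlocks_multiply]
    rw [show -(fromBlocks 0 1 (-1) 0 : Matrix (Fin n ⊕ Fin n) (Fin n ⊕ Fin n) ℝ)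
        = fromBlocks 0 (-1) 1 0 by simp [fromBlocks_neg]]
    simp only [transpose_neg, hRt, transpose_mul, hRinvT, transpose_zero, Matrix.mul_zero,
      Matrix.zero_mul, Matrix.mul_one, Matrix.one_mul, Matrix.neg_mul, Matrix.mul_neg,
      add_zero, zero_add, neg_neg, Matrix.mul_assoc]
    rw [hXt, hRinvR]
    simp [hRRinv]
  · rw [hD]
    have hmap : ∀ M N : Matrix (Fin n) (Fin n) ℝ,
        (M * N).map (Complex.ofReal) = M.map Complex.ofReal * N.map Complex.ofReal := fun M N =>
      Matrix.map_mul (f := Complex.ofRealHom)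
    have h0 : (0 : Matrix (Fin n) (Fin n) ℝ).map Complex.ofReal = 0 :=
      Matrix.map_zero _ Complex.ofReal_zero
    have hone : (1 : Matrix (Fin n) (Fin n) ℝ).map Complex.ofReal = 1 :=
      Matrix.map_one _ Complex.ofReal_zero Complex.ofReal_one
    have hneg : (-R).map Complex.ofReal = -(R.map Complex.ofReal) := by
      ext i j; simp
    have hinv1 : (R⁻¹).map Complex.ofReal * R.map Complex.ofReal = 1 := by
      rw [← hmap, hRinvR, hone]
    have hDinv : ((R⁻¹).map Complex.ofReal)⁻¹ = R.map Complex.ofReal := inv_eq_right_inv hinv1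
    simp only [Phi, h0, Matrix.zero_mul, zero_add, hDinv, hneg]
    rw [Matrix.mul_smul, Matrix.mul_one, Matrix.add_mul, Matrix.smul_mul, Matrix.neg_mul,
      ← hmap, hRR, hmap X R⁻¹, Matrix.mul_assoc, hinv1, Matrix.mul_one]
    ext i j
    simp [hYdef, hXdef, Complex.ext_iff, mul_comm]
end
end

section
/- If S ∈ SP₂ₙ(ℂ) is purely imaginary (S = iQ with Q real), then for every Z in the Siegel upper half space, Φ_S(Z) is well defined and lies in 𝒮̄ₙ (complex symmetric matrices with negative definite imaginary part). -/
open Matrix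

noncomputable section

section Aux

variable {m : ℕ}

lemma cdot_re (Y : Matrix (Fin m) (Fin m) ℝ) (v : Fin m → ℂ) :
    (star v ⬝ᵥ (Y.map (fun r => (r : ℂ))) *ᵥ v).re
      = (fun i => (v i).re) ⬝ᵥ Y *ᵥ (fun i => (v i).re)
        + (fun i => (v i).im) ⬝ᵥ Y *ᵥ (fun i => (v i).im) := by
  simp only [dotProduct, mulVec, map_apply, Pi.star_apply, RCLike.star_def]
  rw [Complex.re_sum, ← Finset.sum_add_distrib]
  refine Finset.sum_congr rfl fun i _ => ?_
  rw [Finset.mul_sum, Complex.re_sum, Finset.mul_sum, Finset.mul_sum,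
    ← Finset.sum_add_distrib]
  refine Finset.sum_congr rfl fun j _ => ?_
  simp only [Complex.mul_re, Complex.mul_im, Complex.conj_re, Complex.conj_im,
    Complex.ofReal_re, Complex.ofReal_im]
  ring

lemma cquad_pos {Y : Matrix (Fin m) (Fin m) ℝ} (hY : Y.PosDef) {v : Fin m → ℂ}
    (hv : v ≠ 0) :
    0 < (star v ⬝ᵥ (Y.map (fun r => (r : ℂ))) *ᵥ v).re := by
  rw [cdot_re]
  by_cases hre : (fun i => (v i).re) = 0
  · have him : (fun i => (v i).im) ≠ 0 := by
      intro h
      apply hv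
      funext i
      exact Complex.ext (congrFun hre i) (congrFun h i)
    have h1 := hY.posSemidef.dotProduct_mulVec_nonneg (fun i => (v i).re)
    have h2 := hY.dotProduct_mulVec_pos him
    simp only [star_trivial] at h1 h2
    linarith
  · have h1 := hY.dotProduct_mulVec_pos hre
    have h2 := hY.posSemidef.dotProduct_mulVec_nonneg (fun i => (v i).im)
    simp only [star_trivial] at h1 h2
    linarith

lemma cdot_ofReal (N : Matrix (Fin m) (Fin m) ℝ) (x : Fin m → ℝ) :
    star (fun i => ((x i : ℝ) : ℂ)) ⬝ᵥ (N.map (fun r => (r : ℂ))) *ᵥ (fun i => ((x i : ℝ) : ℂ))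
      = ((x ⬝ᵥ N *ᵥ x : ℝ) : ℂ) := by
  simp only [dotProduct, mulVec, map_apply, Pi.star_apply, RCLike.star_def,
    Complex.conj_ofReal]
  push_cast
  rfl

end Aux

theorem stmt5 (n : ℕ) (Q : Matrix (Fin n ⊕ Fin n) (Fin n ⊕ Fin n) ℝ)
    (S : Matrix (Fin n ⊕ Fin n) (Fin n ⊕ Fin n) ℂ)
    (hSQ : S = Complex.I • Q.map Complex.ofReal)
    (hS : Sᵀ * J n * S = J n)
    (Z : Matrix (Fin n) (Fin n) ℂ) (hZ : InSiegel Z) :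
    IsUnit (S.toBlocks₂₁ * Z + S.toBlocks₂₂) ∧
      InSiegelBar (Phi S.toBlocks₁₁ S.toBlocks₁₂ S.toBlocks₂₁ S.toBlocks₂₂ Z) := by
  obtain ⟨hZs, hY⟩ := hZ
  set A := S.toBlocks₁₁ with hA
  set B := S.toBlocks₁₂ with hB
  set C := S.toBlocks₂₁ with hC
  set D := S.toBlocks₂₂ with hD
  -- block identities from the symplectic relation
  rw [← fromBlocks_toBlocks S, _root_.J] at hS
  simp only [fromBlocks_transpose, fromBlocks_multiply, Matrix.mul_zero, Matrix.mul_one,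
    Matrix.mul_neg, zero_add, add_zero, neg_zero, mul_zero, mul_one, mul_neg] at hS
  have h11 := congrArg Matrix.toBlocks₁₁ hS
  have h12 := congrArg Matrix.toBlocks₁₂ hS
  have h21 := congrArg Matrix.toBlocks₂₁ hS
  have h22 := congrArg Matrix.toBlocks₂₂ hS
  simp only [toBlocks_fromBlocks₁₁, toBlocks_fromBlocks₁₂, toBlocks_fromBlocks₂₁,
    toBlocks_fromBlocks₂₂] at h11 h12 h21 h22
  -- h11 : -Cᵀ * A + Aᵀ * C = 0
  -- h12 : -Cᵀ * B + Aᵀ * D = 1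
  -- h21 : -Dᵀ * A + Bᵀ * C = -1
  -- h22 : -Dᵀ * B + Bᵀ * D = 0
  set V := A * Z + B with hV
  set W := C * Z + D with hW
  -- conjugation facts
  have hconj : ∀ p q, (starRingEnd ℂ) (S p q) = -S p q := by
    intro p q
    rw [hSQ]
    simp [Matrix.smul_apply, Matrix.map_apply, Complex.conj_ofReal]
  have hstarblock : ∀ (M : Matrix (Fin n) (Fin n) ℂ),
      (∀ i j, (starRingEnd ℂ) (M i j) = -M i j) → Mᴴ = -Mᵀ := by
    intro M hM
    ext i j
    simp only [conjTranspose_apply, neg_apply, transpose_apply, RCLike.star_def]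
    exact hM j i
  have hAH : Aᴴ = -Aᵀ := hstarblock A fun i j => hconj _ _
  have hBH : Bᴴ = -Bᵀ := hstarblock B fun i j => hconj _ _
  have hCH : Cᴴ = -Cᵀ := hstarblock C fun i j => hconj _ _
  have hDH : Dᴴ = -Dᵀ := hstarblock D fun i j => hconj _ _
  -- key identity
  have hkey : Wᴴ * V - Vᴴ * W = Zᴴ - Z := by
    have hWH : Wᴴ = Zᴴ * (-Cᵀ) + (-Dᵀ) := by
      rw [hW, conjTranspose_add, conjTranspose_mul, hCH, hDH]
    have hVH : Vᴴ = Zᴴ * (-Aᵀ) + (-Bᵀ) := by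
      rw [hV, conjTranspose_add, conjTranspose_mul, hAH, hBH]
    calc Wᴴ * V - Vᴴ * W
        = (Zᴴ * (-Cᵀ) + (-Dᵀ)) * (A * Z + B) - (Zᴴ * (-Aᵀ) + (-Bᵀ)) * (C * Z + D) := by
          rw [hWH, hVH, hV, hW]
      _ = Zᴴ * (-Cᵀ * A + Aᵀ * C) * Z + Zᴴ * (-Cᵀ * B + Aᵀ * D)
          + ((-Dᵀ * A + Bᵀ * C) * Z + (-Dᵀ * B + Bᵀ * D)) := by noncomm_ring
      _ = Zᴴ - Z := by rw [h11, h12, h21, h22]; noncomm_ring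
  -- symmetry identity
  have hVW : Vᵀ * W = Wᵀ * V := by
    have : Vᵀ * W - Wᵀ * V = 0 := by
      have hVt : Vᵀ = Z * Aᵀ + Bᵀ := by rw [hV, transpose_add, transpose_mul, hZs]
      have hWt : Wᵀ = Z * Cᵀ + Dᵀ := by rw [hW, transpose_add, transpose_mul, hZs]
      calc Vᵀ * W - Wᵀ * V
          = (Z * Aᵀ + Bᵀ) * (C * Z + D) - (Z * Cᵀ + Dᵀ) * (A * Z + B) := by
            rw [hVt, hWt, hV, hW]
        _ = Z * (-Cᵀ * A + Aᵀ * C) * Z + Z * (-Cᵀ * B + Aᵀ * D)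
            + ((-Dᵀ * A + Bᵀ * C) * Z + (-Dᵀ * B + Bᵀ * D)) := by noncomm_ring
        _ = 0 := by rw [h11, h12, h21, h22]; noncomm_ring
    rwa [sub_eq_zero] at this
  -- imaginary part relation
  set Y := Z.map Complex.im with hYdef
  have hZY : Zᴴ - Z = (-(2 : ℂ) * Complex.I) • (Y.map (fun r => (r : ℂ))) := by
    ext i j
    have hz : Z j i = Z i j := by conv_lhs => rw [← hZs, transpose_apply]
    simp only [Matrix.sub_apply, conjTranspose_apply, Matrix.smul_apply, map_apply, RCLike.star_def,
      hz, smul_eq_mul, hYdef]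
    have := Complex.sub_conj (Z i j)
    push_cast at this ⊢
    linear_combination -this
  -- invertibility of W
  have hquad0 : ∀ v : Fin n → ℂ, W *ᵥ v = 0 → star v ⬝ᵥ ((Zᴴ - Z) *ᵥ v) = 0 := by
    intro v hv
    rw [← hkey, Matrix.sub_mulVec, dotProduct_sub]
    have h1' : star v ⬝ᵥ ((Wᴴ * V) *ᵥ v) = 0 := by
      rw [← mulVec_mulVec, dotProduct_mulVec, ← star_mulVec, hv, star_zero,
        zero_dotProduct]
    have h2' : star v ⬝ᵥ ((Vᴴ * W) *ᵥ v) = 0 := by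
      rw [← mulVec_mulVec, hv, mulVec_zero, dotProduct_zero]
    rw [h1', h2', sub_zero]
  have hWdet : IsUnit W.det := by
    rw [isUnit_iff_ne_zero]
    intro hdet
    obtain ⟨v, hv0, hv⟩ := Matrix.exists_mulVec_eq_zero_iff.mpr hdet
    have h0 := hquad0 v hv
    rw [hZY, smul_mulVec, dotProduct_smul, smul_eq_mul, mul_eq_zero] at h0
    rcases h0 with h0 | h0
    · simp [Complex.I_ne_zero] at h0
    · have hpos := cquad_pos hY hv0
      rw [h0] at hpos
      simp at hpos
  have hWunit : IsUnit W := (isUnit_iff_isUnit_det W).mpr hWdet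
  have hWW : W * W⁻¹ = 1 := mul_nonsing_inv W hWdet
  have hWW' : W⁻¹ * W = 1 := nonsing_inv_mul W hWdet
  refine ⟨hWunit, ?_, ?_⟩
  · -- symmetry of Phi
    show (V * W⁻¹)ᵀ = V * W⁻¹
    have hdetWT : IsUnit Wᵀ.det := by rwa [det_transpose]
    calc (V * W⁻¹)ᵀ = Wᵀ⁻¹ * Vᵀ := by rw [transpose_mul, transpose_nonsing_inv]
      _ = Wᵀ⁻¹ * (Vᵀ * (W * W⁻¹)) := by rw [hWW, Matrix.mul_one]
      _ = Wᵀ⁻¹ * (Wᵀ * (V * W⁻¹)) := by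
          rw [← Matrix.mul_assoc Vᵀ, hVW, Matrix.mul_assoc]
      _ = V * W⁻¹ := by rw [← Matrix.mul_assoc, nonsing_inv_mul Wᵀ hdetWT, Matrix.one_mul]
  · -- negative definiteness of the imaginary part
    show (-(((V * W⁻¹).map Complex.im))).PosDef
    set Φ := V * W⁻¹ with hPhi
    set Yc := Y.map (fun r => (r : ℂ)) with hYc
    set M := W⁻¹ᴴ * Yc * W⁻¹ with hM
    have hPhiSym : Φᵀ = Φ := by
      have hdetWT : IsUnit Wᵀ.det := by rwa [det_transpose]
      calc Φᵀ = Wᵀ⁻¹ * Vᵀ := by rw [hPhi, transpose_mul, transpose_nonsing_inv]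
        _ = Wᵀ⁻¹ * (Vᵀ * (W * W⁻¹)) := by rw [hWW, Matrix.mul_one]
        _ = Wᵀ⁻¹ * (Wᵀ * (V * W⁻¹)) := by
            rw [← Matrix.mul_assoc Vᵀ, hVW, Matrix.mul_assoc]
        _ = Φ := by rw [← Matrix.mul_assoc, nonsing_inv_mul Wᵀ hdetWT, Matrix.one_mul]
    have key2 : Φ - Φᴴ = (-(2 : ℂ) * Complex.I) • M := by
      have e1 : W⁻¹ᴴ * Wᴴ = 1 := by rw [← conjTranspose_mul, hWW, conjTranspose_one]
      calc Φ - Φᴴ = V * W⁻¹ - W⁻¹ᴴ * Vᴴ := by rw [hPhi, conjTranspose_mul]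
        _ = W⁻¹ᴴ * Wᴴ * (V * W⁻¹) - W⁻¹ᴴ * (Vᴴ * (W * W⁻¹)) := by
            rw [e1, hWW, Matrix.one_mul, Matrix.mul_one]
        _ = W⁻¹ᴴ * (Wᴴ * V - Vᴴ * W) * W⁻¹ := by noncomm_ring
        _ = W⁻¹ᴴ * (Zᴴ - Z) * W⁻¹ := by rw [hkey]
        _ = (-(2 : ℂ) * Complex.I) • M := by
            rw [hZY, Matrix.mul_smul, Matrix.smul_mul]
    -- M is the complexification of -(Φ.map im)
    have hMN : (-(Φ.map Complex.im)).map (fun r => (r : ℂ)) = M := by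
      ext i j
      have hent : (Φ - Φᴴ) i j = ((-(2 : ℂ) * Complex.I) • M) i j := by rw [key2]
      have hsym' : Φ j i = Φ i j := by conv_lhs => rw [← hPhiSym, transpose_apply]
      simp only [Matrix.sub_apply, conjTranspose_apply, Matrix.smul_apply, RCLike.star_def, hsym',
        smul_eq_mul] at hent
      have hsc := Complex.sub_conj (Φ i j)
      simp only [map_apply, Matrix.neg_apply]
      have hIne : (-(2 : ℂ) * Complex.I) ≠ 0 := by
        simp [Complex.I_ne_zero]
      apply mul_left_cancel₀ hIne
      rw [← hent]
      push_cast at hsc ⊢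
      linear_combination -hsc
    refine Matrix.PosDef.of_dotProduct_mulVec_pos ?_ ?_
    · -- hermitian
      ext i j
      have hsym' : Φ j i = Φ i j := by conv_lhs => rw [← hPhiSym, transpose_apply]
      simp [conjTranspose_apply, hsym']
    · -- positivity
      intro x hx
      have hxc : (fun i => ((x i : ℝ) : ℂ)) ≠ 0 := by
        intro h
        apply hx
        funext i
        have := congrFun h i
        simpa using this
      set xc := fun i => ((x i : ℝ) : ℂ) with hxcdef
      set u := W⁻¹ *ᵥ xc with hu
      have hu0 : u ≠ 0 := by
        intro h
        apply hxc
        have hxid : xc = (W * W⁻¹) *ᵥ xc := by rw [hWW, Matrix.one_mulVec]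
        rw [hxid, ← mulVec_mulVec, ← hu, h, mulVec_zero]
      have hdot : star xc ⬝ᵥ (M *ᵥ xc) = star u ⬝ᵥ (Yc *ᵥ u) := by
        rw [hM, ← mulVec_mulVec, ← mulVec_mulVec, dotProduct_mulVec (star xc) W⁻¹ᴴ,
          ← star_mulVec, ← hu]
      have hr : star xc ⬝ᵥ (M *ᵥ xc)
          = ((x ⬝ᵥ (-(Φ.map Complex.im)) *ᵥ x : ℝ) : ℂ) := by
        rw [← hMN, hxcdef, cdot_ofReal]
      have hpos := cquad_pos hY hu0
      rw [← hdot, hr] at hpos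
      simp only [Complex.ofReal_re] at hpos
      simpa using hpos
end
end

section
/- Let S = [[A,B],[C,D]] ∈ SP₂ₙ(ℂ) with i(S*JS - J) ≥ 0 (positive semidefinite), and Z ∈ 𝒮ₙ. Setting E = AZ+B and F = CZ+D, the matrix (1/i)(F*E - E*F) is positive definite. -/
open Matrix
open scoped ComplexOrder

noncomputable section

/-- Mapping a real positive definite matrix to ℂ entrywise preserves positive
definiteness. -/
lemma map_ofReal_posDef {n : ℕ} {R : Matrix (Fin n) (Fin n) ℝ} (hR : R.PosDef) :
    (R.map (Complex.ofReal)).PosDef := by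
  have hsd : (R.map Complex.ofReal).PosSemidef := by
    obtain ⟨S, hS⟩ : ∃ S : Matrix (Fin n) (Fin n) ℝ, R = star S * S := by
      open scoped MatrixOrder in exact CStarAlgebra.nonneg_iff_eq_star_mul_self.mp hR.posSemidef.nonneg
    have hmap : R.map Complex.ofReal = (S.map Complex.ofReal)ᴴ * (S.map Complex.ofReal) := by
      rw [hS]
      ext i j
      simp [Matrix.mul_apply, Matrix.conjTranspose_apply]
    rw [hmap]
    exact Matrix.posSemidef_conjTranspose_mul_self _
  refine Matrix.PosDef.of_dotProduct_mulVec_pos hsd.isHermitian fun x hx => ?_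
  rcases lt_or_eq_of_le (hsd.dotProduct_mulVec_nonneg x) with h | h
  · exact h
  · exfalso
    have h0 : (R.map Complex.ofReal) *ᵥ x = 0 := (hsd.dotProduct_mulVec_zero_iff x).mp h.symm
    have hdet : (R.map Complex.ofReal).det ≠ 0 := by
      have hd : (R.map Complex.ofReal).det = (Complex.ofReal R.det) := by
        rw [show R.map Complex.ofReal = Complex.ofRealHom.mapMatrix R from rfl]
        exact (RingHom.map_det Complex.ofRealHom R).symm
      rw [hd]
      exact_mod_cast hR.det_pos.ne'
    have hinj := Matrix.mulVec_injective_iff_isUnit.mpr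
      ((Matrix.isUnit_iff_isUnit_det _).mpr (isUnit_iff_ne_zero.mpr hdet))
    exact hx (hinj (by simp [h0]))

theorem stmt8 (n : ℕ) (A B C D : Matrix (Fin n) (Fin n) ℂ)
    (hS : (Matrix.fromBlocks A B C D)ᵀ * J n * Matrix.fromBlocks A B C D = J n)
    (hM : (Complex.I •
      ((Matrix.fromBlocks A B C D)ᴴ * J n * Matrix.fromBlocks A B C D - J n)).PosSemidef)
    (Z : Matrix (Fin n) (Fin n) ℂ) (hZ : InSiegel Z) :
    (Complex.I⁻¹ •
      ((C * Z + D)ᴴ * (A * Z + B) - (A * Z + B)ᴴ * (C * Z + D))).PosDef := by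
  obtain ⟨hZsymm, hZim⟩ := hZ
  set S : Matrix (Fin n ⊕ Fin n) (Fin n ⊕ Fin n) ℂ := Matrix.fromBlocks A B C D with hSdef
  set E : Matrix (Fin n) (Fin n) ℂ := A * Z + B with hE
  set F : Matrix (Fin n) (Fin n) ℂ := C * Z + D with hF
  set W : Matrix (Fin n ⊕ Fin n) (Fin n) ℂ := Matrix.fromRows Z 1 with hWdef
  have hSW : S * W = Matrix.fromRows E F := by
    rw [hSdef, hWdef, Matrix.fromBlocks_mul_fromRows]
    simp [hE, hF]
  have hWH : Wᴴ = Matrix.fromCols Zᴴ 1 := by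
    rw [hWdef, Matrix.conjTranspose_fromRows_eq_fromCols_conjTranspose,
      Matrix.conjTranspose_one]
  have hJW : J n * W = Matrix.fromRows 1 (-Z) := by
    rw [_root_.J, hWdef, Matrix.fromBlocks_mul_fromRows]
    simp
  have h2 : Wᴴ * J n * W = Zᴴ - Z := by
    rw [Matrix.mul_assoc, hJW, hWH, Matrix.fromCols_mul_fromRows]
    simp [sub_eq_add_neg]
  have hJSW : J n * (S * W) = Matrix.fromRows F (-E) := by
    rw [hSW, _root_.J, Matrix.fromBlocks_mul_fromRows]
    simp
  have h1 : Wᴴ * (Sᴴ * J n * S) * W = Eᴴ * F - Fᴴ * E := by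
    have hassoc : Wᴴ * (Sᴴ * J n * S) * W = (S * W)ᴴ * (J n * (S * W)) := by
      simp only [Matrix.conjTranspose_mul, Matrix.mul_assoc]
    rw [hassoc, hJSW, hSW, Matrix.conjTranspose_fromRows_eq_fromCols_conjTranspose,
      Matrix.fromCols_mul_fromRows]
    simp [Matrix.mul_neg, sub_eq_add_neg]
  have expand : Wᴴ * (Complex.I • (Sᴴ * J n * S - J n)) * W
      = Complex.I • ((Eᴴ * F - Fᴴ * E) - (Zᴴ - Z)) := by
    rw [Matrix.mul_smul, Matrix.smul_mul, Matrix.mul_sub, Matrix.sub_mul, h1, h2]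
  have key : Complex.I⁻¹ • (Fᴴ * E - Eᴴ * F)
      = (Complex.I⁻¹ • (Z - Zᴴ)) + Wᴴ * (Complex.I • (Sᴴ * J n * S - J n)) * W := by
    rw [expand, Complex.inv_I]
    module
  rw [key]
  have hP : Complex.I⁻¹ • (Z - Zᴴ) = ((2 : ℝ) • (Z.map Complex.im)).map Complex.ofReal := by
    ext i j
    have hsym : Z j i = Z i j := by
      have := congrFun (congrFun hZsymm i) j
      simpa using this
    simp only [Matrix.smul_apply, Matrix.sub_apply, Matrix.conjTranspose_apply, Matrix.map_apply,
      hsym, Complex.inv_I, smul_eq_mul, neg_smul, Pi.smul_apply]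
    apply Complex.ext <;> simp [Complex.ext_iff] <;> ring
  have h2Im : ((2 : ℝ) • (Z.map Complex.im)).PosDef := by
    have hherm : ((2 : ℝ) • (Z.map Complex.im)).IsHermitian := by
      show _ᴴ = _
      rw [Matrix.conjTranspose_smul, hZim.1.eq]
      simp
    refine Matrix.PosDef.of_dotProduct_mulVec_pos hherm fun x hx => ?_
    have hq := hZim.dotProduct_mulVec_pos hx
    rw [Matrix.smul_mulVec, dotProduct_smul]
    simpa using by positivity
  rw [hP]
  exact (map_ofReal_posDef h2Im).add_posSemidef (hM.conjTranspose_mul_mul_same W)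
end
end

section
/- Let S = [[A,B],[C,D]] ∈ SP₂ₙ(ℂ) satisfy i(S*JS - J) ≥ 0, and Z ∈ 𝒮ₙ. Then CZ+D is invertible and Φ_S(Z) = (AZ+B)(CZ+D)⁻¹ ∈ 𝒮ₙ (i.e., it is symmetric with positive definite imaginary part). -/
open Matrix
open scoped ComplexOrder

noncomputable section

namespace SiegelAux

variable {n : ℕ}

lemma herm_quad_im {M : Matrix (Fin n) (Fin n) ℂ} (hM : M.IsHermitian) (x : Fin n → ℂ) :
    (star x ⬝ᵥ M *ᵥ x).im = 0 := by
  rw [← Complex.conj_eq_iff_im]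
  calc (starRingEnd ℂ) (star x ⬝ᵥ M *ᵥ x)
      = star (M *ᵥ x) ⬝ᵥ star (star x) := (star_dotProduct_star _ _).symm
    _ = (star x ᵥ* Mᴴ) ⬝ᵥ x := by rw [star_mulVec, star_star]
    _ = star x ⬝ᵥ Mᴴ *ᵥ x := (dotProduct_mulVec _ _ _).symm
    _ = star x ⬝ᵥ M *ᵥ x := by rw [hM.eq]

lemma posDef_map_ofReal {R : Matrix (Fin n) (Fin n) ℝ} :
    (R.map (fun r => (r : ℂ))).PosDef ↔ R.PosDef := by
  constructor
  · intro hP; obtain ⟨h1, h2⟩ := posDef_iff_dotProduct_mulVec.mp hP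
    refine posDef_iff_dotProduct_mulVec.mpr ⟨?_, ?_⟩
    · ext i j
      have := congrFun (congrFun h1 i) j
      simp only [conjTranspose_apply, map_apply, Complex.star_def, Complex.conj_ofReal,
        transpose_apply] at this
      exact Complex.ofReal_injective this
    · intro u hu
      have hx : (fun i => ((u i : ℂ))) ≠ 0 := by
        intro h; apply hu; funext i
        simpa using congrFun h i
      have h := h2 hx
      have hq : star (fun i => ((u i : ℂ))) ⬝ᵥ (R.map (fun r => (r:ℂ))) *ᵥ (fun i => ((u i : ℂ)))
          = ((star u ⬝ᵥ R *ᵥ u : ℝ) : ℂ) := by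
        simp only [dotProduct, mulVec, Pi.star_apply, Complex.star_def, Complex.conj_ofReal,
          map_apply, star_trivial]
        push_cast
        rfl
      rw [hq] at h
      exact Complex.zero_lt_real.mp h
  · intro hR; obtain ⟨h1, h2⟩ := posDef_iff_dotProduct_mulVec.mp hR
    have hsym : ∀ i j, R j i = R i j := fun i j => by
      simpa using congrFun (congrFun h1 i) j
    have hherm : (R.map (fun r => (r : ℂ))).IsHermitian := by
      ext i j
      simp [conjTranspose_apply, map_apply, Complex.conj_ofReal, hsym i j]
    refine posDef_iff_dotProduct_mulVec.mpr ⟨hherm, fun x hx => ?_⟩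
    set u : Fin n → ℝ := fun i => (x i).re with hu
    set v : Fin n → ℝ := fun i => (x i).im with hv
    have him : (star x ⬝ᵥ (R.map (fun r => (r:ℂ))) *ᵥ x).im = 0 := herm_quad_im hherm x
    have hre : (star x ⬝ᵥ (R.map (fun r => (r:ℂ))) *ᵥ x).re
        = star u ⬝ᵥ R *ᵥ u + star v ⬝ᵥ R *ᵥ v := by
      simp only [dotProduct, mulVec, Pi.star_apply, Complex.star_def, map_apply, star_trivial,
        Finset.mul_sum]
      rw [Complex.re_sum]
      rw [← Finset.sum_add_distrib]
      refine Finset.sum_congr rfl fun i _ => ?_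
      rw [Complex.re_sum, ← Finset.sum_add_distrib]
      refine Finset.sum_congr rfl fun j _ => ?_
      simp only [Complex.mul_re, Complex.mul_im, Complex.conj_re, Complex.conj_im,
        Complex.ofReal_re, Complex.ofReal_im, u, v]
      ring
    have hx' : u ≠ 0 ∨ v ≠ 0 := by
      by_contra hcon
      push_neg at hcon
      apply hx
      funext i
      exact Complex.ext (congrFun hcon.1 i) (congrFun hcon.2 i)
    have hpos : 0 < star u ⬝ᵥ R *ᵥ u + star v ⬝ᵥ R *ᵥ v := by
      rcases hx' with h | h
      · exact add_pos_of_pos_of_nonneg (h2 h) (hR.posSemidef.dotProduct_mulVec_nonneg v)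
      · exact add_pos_of_nonneg_of_pos (hR.posSemidef.dotProduct_mulVec_nonneg u) (h2 h)
    rw [Complex.lt_def]
    exact ⟨by simpa [hre] using hpos, by simp [him]⟩

lemma posDef_two_smul_iff {R : Matrix (Fin n) (Fin n) ℝ} :
    ((2:ℝ) • R).PosDef ↔ R.PosDef := by
  constructor
  · intro hP; obtain ⟨h1, h2⟩ := posDef_iff_dotProduct_mulVec.mp hP
    refine posDef_iff_dotProduct_mulVec.mpr ⟨?_, ?_⟩
    · ext i j
      have := congrFun (congrFun h1 i) j
      simp only [conjTranspose_apply, Matrix.smul_apply, star_trivial, smul_eq_mul,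
        transpose_apply] at this ⊢
      linarith
    · intro x hx
      have h := h2 hx
      simp only [smul_mulVec, dotProduct_smul, smul_eq_mul] at h
      linarith
  · rintro h
    refine posDef_iff_dotProduct_mulVec.mpr ⟨?_, fun x hx => ?_⟩
    · ext i j
      have := congrFun (congrFun h.1 i) j
      simp only [conjTranspose_apply, Matrix.smul_apply, star_trivial, smul_eq_mul,
        transpose_apply] at this ⊢
      linarith
    · have := h.dotProduct_mulVec_pos hx
      simp only [smul_mulVec, dotProduct_smul, smul_eq_mul]
      linarith

/-- key identity relating the imaginary part and `I • (Mᴴ - M)` for symmetric matrices. -/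
lemma smul_sub_eq {M : Matrix (Fin n) (Fin n) ℂ} (hM : Mᵀ = M) :
    Complex.I • (Mᴴ - M) = (((2:ℝ) • M.map Complex.im).map (fun r => (r : ℂ))) := by
  ext i j
  have hji : M j i = M i j := congrFun (congrFun hM i) j
  simp only [Matrix.smul_apply, Matrix.sub_apply, conjTranspose_apply, map_apply, smul_eq_mul,
    Complex.star_def, hji]
  apply Complex.ext <;>
    simp [Complex.mul_re, Complex.mul_im, Complex.conj_re, Complex.conj_im] <;> ring

lemma posDef_imag_iff {M : Matrix (Fin n) (Fin n) ℂ} (hM : Mᵀ = M) :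
    (Complex.I • (Mᴴ - M)).PosDef ↔ (M.map Complex.im).PosDef := by
  rw [smul_sub_eq hM, posDef_map_ofReal, posDef_two_smul_iff]

lemma posDef_conj_of_isUnit {K N : Matrix (Fin n) (Fin n) ℂ} (hK : K.PosDef)
    (hN : IsUnit N.det) : (Nᴴ * K * N).PosDef := by
  refine posDef_iff_dotProduct_mulVec.mpr ⟨Matrix.isHermitian_conjTranspose_mul_mul _ hK.1, fun x hx => ?_⟩
  have hNx : N *ᵥ x ≠ 0 := by
    intro h
    apply hx
    have : N⁻¹ *ᵥ (N *ᵥ x) = x := by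
      rw [mulVec_mulVec, Matrix.nonsing_inv_mul _ hN, one_mulVec]
    rw [h, mulVec_zero] at this
    exact this.symm
  simpa only [star_mulVec, dotProduct_mulVec, vecMul_vecMul] using hK.dotProduct_mulVec_pos hNx

end SiegelAux

open SiegelAux

theorem stmt9 (n : ℕ) (A B C D : Matrix (Fin n) (Fin n) ℂ)
    (hS : (Matrix.fromBlocks A B C D)ᵀ * J n * Matrix.fromBlocks A B C D = J n)
    (hM : (Complex.I •
      ((Matrix.fromBlocks A B C D)ᴴ * J n * Matrix.fromBlocks A B C D - J n)).PosSemidef)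
    (Z : Matrix (Fin n) (Fin n) ℂ) (hZ : InSiegel Z) :
    IsUnit (C * Z + D) ∧ InSiegel (Phi A B C D Z) := by
  obtain ⟨hZs, hZp⟩ := hZ
  set S := Matrix.fromBlocks A B C D with hSdef
  set P := A * Z + B with hPdef
  set Q := C * Z + D with hQdef
  set W : Matrix (Fin n ⊕ Fin n) (Fin n) ℂ := fromRows Z 1 with hWdef
  have hJdef : _root_.J n = Matrix.fromBlocks 0 1 (-1) 0 := rfl
  have hSW : S * W = fromRows P Q := by
    rw [hSdef, hWdef, fromBlocks_mul_fromRows]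
    simp [hPdef, hQdef]
  have hJSW : _root_.J n * (S * W) = fromRows Q (-P) := by
    rw [hSW, hJdef, fromBlocks_mul_fromRows]
    simp
  have hJW : _root_.J n * W = fromRows 1 (-Z) := by
    rw [hJdef, hWdef, fromBlocks_mul_fromRows]
    simp
  -- transpose computations
  have e3 : Wᵀ * (_root_.J n * W) = 0 := by
    rw [hJW, hWdef, transpose_fromRows, fromCols_mul_fromRows]
    simp [hZs]
  have e4 : (S * W)ᵀ * (_root_.J n * (S * W)) = Pᵀ * Q - Qᵀ * P := by
    rw [hJSW, hSW, transpose_fromRows, fromCols_mul_fromRows]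
    simp [Matrix.mul_neg, sub_eq_add_neg]
  have hsymPQ : Pᵀ * Q - Qᵀ * P = 0 := by
    have h1 : (S * W)ᵀ * (_root_.J n * (S * W)) = Wᵀ * ((Sᵀ * _root_.J n * S) * W) := by
      rw [transpose_mul]
      simp only [Matrix.mul_assoc]
    rw [h1, hS, e3] at e4
    exact e4.symm
  -- conjTranspose computations
  have e1 : Wᴴ * (_root_.J n * W) = Zᴴ - Z := by
    rw [hJW, hWdef, conjTranspose_fromRows_eq_fromCols_conjTranspose,
      fromCols_mul_fromRows]
    simp [sub_eq_add_neg]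
  have e2 : (S * W)ᴴ * (_root_.J n * (S * W)) = Pᴴ * Q - Qᴴ * P := by
    rw [hJSW, hSW, conjTranspose_fromRows_eq_fromCols_conjTranspose,
      fromCols_mul_fromRows]
    simp [Matrix.mul_neg, sub_eq_add_neg]
  -- the key positive definite matrix K
  set K : Matrix (Fin n) (Fin n) ℂ := Complex.I • (Pᴴ * Q - Qᴴ * P) with hKdef
  have hWc : Wᴴ * (Sᴴ * _root_.J n * S) * W = Pᴴ * Q - Qᴴ * P := by
    rw [← e2, conjTranspose_mul]
    simp only [Matrix.mul_assoc]
  have hWc2 : Wᴴ * _root_.J n * W = Zᴴ - Z := by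
    rw [Matrix.mul_assoc]; exact e1
  have hKsplit : K = Complex.I • (Zᴴ - Z)
      + Wᴴ * (Complex.I • (Sᴴ * _root_.J n * S - _root_.J n)) * W := by
    have step1 : Pᴴ * Q - Qᴴ * P = (Zᴴ - Z) + ((Pᴴ * Q - Qᴴ * P) - (Zᴴ - Z)) := by abel
    calc K = Complex.I • (Zᴴ - Z) + Complex.I • ((Pᴴ * Q - Qᴴ * P) - (Zᴴ - Z)) := by
            rw [hKdef, ← smul_add, ← step1]
      _ = Complex.I • (Zᴴ - Z) + Wᴴ * (Complex.I • (Sᴴ * _root_.J n * S - _root_.J n)) * W := by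
            congr 1
            rw [Matrix.mul_smul, Matrix.smul_mul]
            congr 1
            rw [Matrix.mul_sub, Matrix.sub_mul, hWc, hWc2]
  have hZpos : (Complex.I • (Zᴴ - Z)).PosDef := (posDef_imag_iff hZs).mpr hZp
  have hKpos : K.PosDef := by
    rw [hKsplit]
    exact hZpos.add_posSemidef (hM.conjTranspose_mul_mul_same W)
  -- invertibility of Q
  have hdet : IsUnit Q.det := by
    rw [isUnit_iff_ne_zero]
    intro hd
    obtain ⟨v, hv0, hQv⟩ := (Matrix.exists_mulVec_eq_zero_iff).mpr hd
    have hpos := hKpos.dotProduct_mulVec_pos hv0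
    have hterm1 : (Pᴴ * Q) *ᵥ v = 0 := by
      rw [← mulVec_mulVec, hQv, mulVec_zero]
    have hterm2 : star v ⬝ᵥ (Qᴴ * P) *ᵥ v = 0 := by
      rw [← mulVec_mulVec, dotProduct_mulVec, ← star_mulVec, hQv, star_zero, zero_dotProduct]
    have hzero : star v ⬝ᵥ K *ᵥ v = 0 := by
      rw [hKdef, smul_mulVec, dotProduct_smul, sub_mulVec, dotProduct_sub, hterm1,
        hterm2, dotProduct_zero]
      simp
    rw [hzero] at hpos
    exact lt_irrefl _ hpos
  have hQu : IsUnit Q := (Matrix.isUnit_iff_isUnit_det Q).mpr hdet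
  have hQQi : Q * Q⁻¹ = 1 := Matrix.mul_nonsing_inv Q hdet
  have hPt : Pᵀ * Q = Qᵀ * P := sub_eq_zero.mp hsymPQ
  have hFsym : (P * Q⁻¹)ᵀ = P * Q⁻¹ := by
    calc (P * Q⁻¹)ᵀ = (Q⁻¹)ᵀ * Pᵀ := transpose_mul _ _
      _ = (Q⁻¹)ᵀ * (Pᵀ * (Q * Q⁻¹)) := by rw [hQQi, Matrix.mul_one]
      _ = ((Q⁻¹)ᵀ * Qᵀ) * (P * Q⁻¹) := by
            rw [← Matrix.mul_assoc (Q⁻¹)ᵀ Pᵀ _, ← Matrix.mul_assoc, Matrix.mul_assoc _ Pᵀ Q,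
              hPt, ← Matrix.mul_assoc, Matrix.mul_assoc]
      _ = (Q * Q⁻¹)ᵀ * (P * Q⁻¹) := by rw [← transpose_mul]
      _ = P * Q⁻¹ := by rw [hQQi, transpose_one, Matrix.one_mul]
  refine ⟨hQu, hFsym, ?_⟩
  -- imaginary part of Phi
  have hIdent : Complex.I • ((P * Q⁻¹)ᴴ - P * Q⁻¹) = (Q⁻¹)ᴴ * K * Q⁻¹ := by
    have h1 : (Q⁻¹)ᴴ * (Pᴴ * Q) * Q⁻¹ = (P * Q⁻¹)ᴴ := by
      rw [conjTranspose_mul, Matrix.mul_assoc, Matrix.mul_assoc, hQQi, Matrix.mul_one]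
    have h2 : (Q⁻¹)ᴴ * (Qᴴ * P) * Q⁻¹ = P * Q⁻¹ := by
      rw [← Matrix.mul_assoc, ← conjTranspose_mul, hQQi, conjTranspose_one, Matrix.one_mul]
    rw [hKdef, Matrix.mul_smul, Matrix.smul_mul]
    congr 1
    rw [Matrix.mul_sub, Matrix.sub_mul, h1, h2]
  have hFpos : (Complex.I • ((P * Q⁻¹)ᴴ - P * Q⁻¹)).PosDef := by
    rw [hIdent]
    exact posDef_conj_of_isUnit hKpos (Matrix.isUnit_nonsing_inv_det Q hdet)
  exact (posDef_imag_iff hFsym).mp hFpos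
end
end

section
/- A 2n×2n self-adjoint block matrix M = [[α,β],[β*,γ]] is positive semidefinite if and only if α ≥ 0, (I - αα†)β = 0, and γ - β*α†β ≥ 0, where α† is the Moore–Penrose pseudoinverse of α. -/
open Matrix
open scoped ComplexOrder

noncomputable section

/-- `Ad` is the Moore–Penrose pseudoinverse of `A`. -/
def IsMoorePenrose {n : ℕ} (A Ad : Matrix (Fin n) (Fin n) ℂ) : Prop :=
  A * Ad * A = A ∧ Ad * A * Ad = Ad ∧ (A * Ad)ᴴ = A * Ad ∧ (Ad * A)ᴴ = Ad * A

/-- Uniqueness of the Moore–Penrose pseudoinverse. -/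
lemma mp_unique {n : ℕ} {A X Y : Matrix (Fin n) (Fin n) ℂ}
    (hX1 : A * X * A = A) (hX2 : X * A * X = X) (hX3 : (A * X)ᴴ = A * X)
    (hX4 : (X * A)ᴴ = X * A)
    (hY1 : A * Y * A = A) (hY2 : Y * A * Y = Y) (hY3 : (A * Y)ᴴ = A * Y)
    (hY4 : (Y * A)ᴴ = Y * A) : X = Y := by
  have hAX : A * X = A * Y := by
    calc A * X = (A * X)ᴴ := hX3.symm
      _ = ((A * Y * A) * X)ᴴ := by rw [hY1]
      _ = ((A * Y) * (A * X))ᴴ := by simp only [Matrix.mul_assoc]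
      _ = (A * X)ᴴ * (A * Y)ᴴ := by rw [conjTranspose_mul]
      _ = (A * X) * (A * Y) := by rw [hX3, hY3]
      _ = (A * X * A) * Y := by simp only [Matrix.mul_assoc]
      _ = A * Y := by rw [hX1]
  have hXA : X * A = Y * A := by
    calc X * A = (X * A)ᴴ := hX4.symm
      _ = (X * (A * Y * A))ᴴ := by rw [hY1]
      _ = ((X * A) * (Y * A))ᴴ := by simp only [Matrix.mul_assoc]
      _ = (Y * A)ᴴ * (X * A)ᴴ := by rw [conjTranspose_mul]
      _ = (Y * A) * (X * A) := by rw [hX4, hY4]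
      _ = Y * (A * X * A) := by simp only [Matrix.mul_assoc]
      _ = Y * A := by rw [hX1]
  calc X = X * A * X := hX2.symm
    _ = X * (A * Y) := by rw [Matrix.mul_assoc, hAX]
    _ = (Y * A) * Y := by rw [← Matrix.mul_assoc, hXA]
    _ = Y := hY2

/-- The Moore–Penrose pseudoinverse of a Hermitian matrix is Hermitian. -/
lemma mp_selfAdjoint {n : ℕ} {A X : Matrix (Fin n) (Fin n) ℂ} (hA : Aᴴ = A)
    (h1 : A * X * A = A) (h2 : X * A * X = X) (h3 : (A * X)ᴴ = A * X)
    (h4 : (X * A)ᴴ = X * A) : Xᴴ = X := by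
  have e1 : A * Xᴴ * A = A := by
    calc A * Xᴴ * A = (Aᴴ * X * Aᴴ)ᴴ := by
          simp [conjTranspose_mul, Matrix.mul_assoc]
      _ = A := by rw [hA, h1, hA]
  have e2 : Xᴴ * A * Xᴴ = Xᴴ := by
    calc Xᴴ * A * Xᴴ = (X * Aᴴ * X)ᴴ := by
          simp [conjTranspose_mul, Matrix.mul_assoc]
      _ = Xᴴ := by rw [hA, h2]
  have e3 : (A * Xᴴ)ᴴ = A * Xᴴ := by
    have hAX : A * Xᴴ = X * A := by
      calc A * Xᴴ = (X * Aᴴ)ᴴ := by rw [conjTranspose_mul, conjTranspose_conjTranspose]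
        _ = (X * A)ᴴ := by rw [hA]
        _ = X * A := h4
    rw [hAX]; exact h4
  have e4 : (Xᴴ * A)ᴴ = Xᴴ * A := by
    have hXA : Xᴴ * A = A * X := by
      calc Xᴴ * A = (Aᴴ * X)ᴴ := by rw [conjTranspose_mul, conjTranspose_conjTranspose]
        _ = (A * X)ᴴ := by rw [hA]
        _ = A * X := h3
    rw [hXA]; exact h3
  exact mp_unique e1 e2 e3 e4 h1 h2 h3 h4

theorem stmt12 (n : ℕ) (α β γ αd : Matrix (Fin n) (Fin n) ℂ)
    (hα : αᴴ = α) (hγ : γᴴ = γ) (hαd : IsMoorePenrose α αd) :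
    (Matrix.fromBlocks α β βᴴ γ).PosSemidef ↔
      α.PosSemidef ∧ (1 - α * αd) * β = 0 ∧ (γ - βᴴ * αd * β).PosSemidef := by
  obtain ⟨h1, h2, h3, h4⟩ := hαd
  -- αd is Hermitian (uniqueness of the Moore–Penrose inverse of a Hermitian matrix)
  have hs : αdᴴ = αd := mp_selfAdjoint hα h1 h2 h3 h4
  constructor
  · intro hM
    obtain ⟨B, hB⟩ : ∃ B : Matrix (Fin n ⊕ Fin n) (Fin n ⊕ Fin n) ℂ,
        Matrix.fromBlocks α β βᴴ γ = Bᴴ * B := by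
      open scoped MatrixOrder in
      obtain ⟨B, hB⟩ := CStarAlgebra.nonneg_iff_eq_star_mul_self.mp hM.nonneg
      exact ⟨B, hB⟩
    set C : Matrix (Fin n ⊕ Fin n) (Fin n) ℂ := B.submatrix id Sum.inl with hC
    set D : Matrix (Fin n ⊕ Fin n) (Fin n) ℂ := B.submatrix id Sum.inr with hD
    have hαC : α = Cᴴ * C := by
      ext i j
      have := congrFun (congrFun hB (Sum.inl i)) (Sum.inl j)
      simpa [Matrix.mul_apply, hC] using this
    have hβC : β = Cᴴ * D := by
      ext i j
      have := congrFun (congrFun hB (Sum.inl i)) (Sum.inr j)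
      simpa [Matrix.mul_apply, hC, hD] using this
    have hγD : γ = Dᴴ * D := by
      ext i j
      have := congrFun (congrFun hB (Sum.inr i)) (Sum.inr j)
      simpa [Matrix.mul_apply, hD] using this
    refine ⟨hαC ▸ Matrix.posSemidef_conjTranspose_mul_self C, ?_, ?_⟩
    · -- (1 - α αd) β = 0
      have hQH : (1 - α * αd)ᴴ = 1 - α * αd := by
        rw [conjTranspose_sub, conjTranspose_one, h3]
      have hCQ : C * (1 - α * αd) = 0 := by
        have : (C * (1 - α * αd))ᴴ * (C * (1 - α * αd)) = 0 := by
          rw [conjTranspose_mul, hQH]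
          have : (1 - α * αd) * (Cᴴ * C) * (1 - α * αd) = 0 := by
            rw [← hαC]
            have hQα : (1 - α * αd) * α = 0 := by
              rw [Matrix.sub_mul, Matrix.one_mul, h1, sub_self]
            rw [hQα, Matrix.zero_mul]
          calc (1 - α * αd) * Cᴴ * (C * (1 - α * αd))
              = (1 - α * αd) * (Cᴴ * C) * (1 - α * αd) := by
                rw [Matrix.mul_assoc, Matrix.mul_assoc, Matrix.mul_assoc]
            _ = 0 := this
        exact Matrix.conjTranspose_mul_self_eq_zero.mp this
      calc (1 - α * αd) * β = (1 - α * αd) * Cᴴ * D := by rw [hβC, Matrix.mul_assoc]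
        _ = (C * (1 - α * αd))ᴴ * D := by rw [conjTranspose_mul, hQH]
        _ = 0 := by rw [hCQ, conjTranspose_zero, Matrix.zero_mul]
    · -- Schur complement PSD
      set R : Matrix (Fin n ⊕ Fin n) (Fin n ⊕ Fin n) ℂ := C * αd * Cᴴ with hR
      have hRH : Rᴴ = R := by
        rw [hR, conjTranspose_mul, conjTranspose_mul, conjTranspose_conjTranspose, hs,
          Matrix.mul_assoc]
      have hRR : R * R = R := by
        rw [hR]
        calc C * αd * Cᴴ * (C * αd * Cᴴ) = C * (αd * (Cᴴ * C) * αd) * Cᴴ := by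
              simp only [Matrix.mul_assoc]
          _ = C * αd * Cᴴ := by rw [← hαC, h2, Matrix.mul_assoc]
      have key : γ - βᴴ * αd * β = ((1 - R) * D)ᴴ * ((1 - R) * D) := by
        rw [conjTranspose_mul, conjTranspose_sub, conjTranspose_one, hRH]
        have h1R : (1 - R) * (1 - R) = 1 - R := by
          rw [Matrix.sub_mul, Matrix.one_mul, Matrix.mul_sub, Matrix.mul_one, hRR]
          abel
        calc γ - βᴴ * αd * β
            = Dᴴ * D - Dᴴ * R * D := by
              rw [hγD, hβC, hR, conjTranspose_mul, conjTranspose_conjTranspose]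
              simp only [Matrix.mul_assoc]
          _ = Dᴴ * ((1 - R) * D) := by
              rw [Matrix.sub_mul, Matrix.one_mul, Matrix.mul_sub, Matrix.mul_assoc]
          _ = Dᴴ * (1 - R) * ((1 - R) * D) := by
              rw [Matrix.mul_assoc Dᴴ, ← Matrix.mul_assoc (1 - R), h1R]
      rw [key]
      exact Matrix.posSemidef_conjTranspose_mul_self _
  · rintro ⟨hpα, hker, hschur⟩
    have hβ : α * αd * β = β := by
      have := sub_eq_zero.mpr hker.symm
      calc α * αd * β = (1 - α * αd) * β + α * αd * β := by rw [hker, zero_add]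
        _ = β := by rw [sub_mul, one_mul, sub_add_cancel]
    have hβH : βᴴ * αd * α = βᴴ := by
      calc βᴴ * αd * α = (αᴴ * αdᴴ * β)ᴴ := by
            rw [conjTranspose_mul, conjTranspose_mul, conjTranspose_conjTranspose,
              conjTranspose_conjTranspose, Matrix.mul_assoc]
        _ = βᴴ := by rw [hα, hs, hβ]
    set S := γ - βᴴ * αd * β with hS
    have hDg : (Matrix.fromBlocks α 0 0 S).PosSemidef := by
      refine Matrix.PosSemidef.of_dotProduct_mulVec_nonneg ?_ ?_
      · rw [Matrix.isHermitian_fromBlocks_iff]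
        exact ⟨hpα.1, by simp, by simp, hschur.1⟩
      · intro x
        have hx : x = Sum.elim (x ∘ Sum.inl) (x ∘ Sum.inr) := (Sum.elim_comp_inl_inr x).symm
        rw [hx]
        have hstar : star (Sum.elim (x ∘ Sum.inl) (x ∘ Sum.inr)) =
            Sum.elim (star (x ∘ Sum.inl)) (star (x ∘ Sum.inr)) := by
          funext i; cases i <;> rfl
        rw [Matrix.fromBlocks_mulVec, hstar]
        simp only [Matrix.zero_mulVec, add_zero, zero_add]
        rw [sumElim_dotProduct_sumElim]
        exact add_nonneg (hpα.dotProduct_mulVec_nonneg _) (hschur.dotProduct_mulVec_nonneg _)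
    have hfact : Matrix.fromBlocks α β βᴴ γ =
        (Matrix.fromBlocks 1 (αd * β) 0 1)ᴴ * Matrix.fromBlocks α 0 0 S *
          Matrix.fromBlocks 1 (αd * β) 0 1 := by
      rw [Matrix.fromBlocks_conjTranspose, Matrix.fromBlocks_multiply,
        Matrix.fromBlocks_multiply]
      simp only [conjTranspose_one, conjTranspose_zero, Matrix.mul_zero, Matrix.zero_mul,
        Matrix.one_mul, Matrix.mul_one, add_zero, zero_add]
      have e12 : α * (αd * β) = β := by rw [← Matrix.mul_assoc]; exact hβ
      have e21 : (αd * β)ᴴ * α = βᴴ := by rw [conjTranspose_mul, hs]; exact hβH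
      have e22 : βᴴ * (αd * β) + S = γ := by
        rw [← Matrix.mul_assoc, hS, add_sub_cancel]
      rw [e12, e21, e22]
    rw [hfact]
    exact hDg.conjTranspose_mul_mul_same _
end
end
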